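/- Let q ≥ 3 and n ≥ 1 be integers and let F_q^⋆ = F_q \ (𝓔_q ∪ {1_q}). If F_q^⋆ is n-cell implementable under scenario (∗∗), then the whole set F_q is n-cell implementable under scenario (∗∗). -/

import Mathlib

/-- The alphabet 𝔹• = {0, 1, ∗, •}. -/
inductive BB : Type
  | zero
  | one
  | star
  | reject
deriving DecidableEq

instance instFintypeBB : Fintype BB :=
  ⟨{BB.zero, BB.one, BB.star, BB.reject}, fun x => by cases x <;> simp⟩

/-- The cell function T : 𝔹• × 𝔹• → 𝔹: T(u,ϑ) = 1 iff u = ∗, or ϑ = ∗,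
or u,ϑ ∈ 𝔹 with u = ϑ. -/
def Tcell : BB → BB → Bool
  | BB.star, _ => true
  | _, BB.star => true
  | BB.zero, BB.zero => true
  | BB.one, BB.one => true
  | _, _ => false

/-- The word-level function T(u,ϑ) = ⋀_{j<n} T(u_j, ϑ_j). -/
def Tword {n : ℕ} (u θ : Fin n → BB) : Bool :=
  decide (∀ j, Tcell (u j) (θ j) = true)

/-- The alphabet 𝔹 = {0,1} ⊆ 𝔹•. -/
def Bcirc : Set BB := {BB.zero, BB.one}

/-- The alphabet 𝔹∗ = {0,1,∗} ⊆ 𝔹•. -/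
def Bstar : Set BB := {BB.zero, BB.one, BB.star}

/-- The full alphabet 𝔹•. -/
def Bdot : Set BB := Set.univ

/-- A family Φ of functions {0,…,q−1} → 𝔹 is n-cell implementable under
scenario (A,B) if there are mappings u : {0,…,q−1} → A^n and ϑ : Φ → B^n
with f(x) = T(u(x), ϑ(f)) for all f ∈ Φ and x. -/
def Implementable (A B : Set BB) (n q : ℕ) (Φ : Set (Fin q → Bool)) : Prop :=
  ∃ u : Fin q → Fin n → BB, ∃ θ : (Fin q → Bool) → Fin n → BB,
    (∀ x j, u x j ∈ A) ∧ (∀ f ∈ Φ, ∀ j, θ f j ∈ B) ∧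
    (∀ f ∈ Φ, ∀ x, f x = Tword (u x) (θ f))

/-- The family 𝓔_q = { x ↦ [x = t] : t ∈ [q⟩ }. -/
def Eset (q : ℕ) : Set (Fin q → Bool) :=
  { f | ∃ t : Fin q, f = fun x => decide (x = t) }

/-- The family 𝓝_q = { x ↦ [x ≠ t] : t ∈ [q⟩ }. -/
def Nset (q : ℕ) : Set (Fin q → Bool) :=
  { f | ∃ t : Fin q, f = fun x => decide (x ≠ t) }

/-- The family 𝓖_q = { x ↦ [x ≥ t] : t ∈ [q⟩ }. -/
def Gset (q : ℕ) : Set (Fin q → Bool) :=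
  { f | ∃ t : Fin q, f = fun x => decide (t ≤ x) }

/-- The family 𝓛_q = { x ↦ [x ≤ t] : t ∈ [q⟩ }. -/
def Lset (q : ℕ) : Set (Fin q → Bool) :=
  { f | ∃ t : Fin q, f = fun x => decide (x ≤ t) }


set_option linter.unusedSectionVars false
set_option linter.unusedVariables false
set_option maxHeartbeats 1000000

section CellAux

open Finset

variable {α β : Type*} [DecidableEq α] [DecidableEq β]


open Finset

variable {α β : Type*} [DecidableEq α] [DecidableEq β]

/-- One-side-per-coordinate union achievability. -/
def Ach (A B : β → Finset α) (J : Finset β) (S : Finset α) : Prop :=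
  ∃ σ : β → Finset α, (∀ j ∈ J, σ j = A j ∨ σ j = B j ∨ σ j = ∅) ∧ J.biUnion σ = S

lemma ach_empty (A B : β → Finset α) (J : Finset β) : Ach A B J ∅ :=
  ⟨fun _ => ∅, fun _ _ => Or.inr (Or.inr rfl), by
    apply Finset.eq_empty_of_forall_notMem
    intro z hz
    obtain ⟨b, _, hzb⟩ := Finset.mem_biUnion.1 hz
    exact Finset.notMem_empty z hzb⟩

lemma sigma_subset {J : Finset β} {S : Finset α} {σ : β → Finset α}
    (hU : J.biUnion σ = S) {j} (hj : j ∈ J) : σ j ⊆ S := by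
  rw [← hU]; exact Finset.subset_biUnion_of_mem σ hj

lemma ach_singleton {A B : β → Finset α} {J : Finset β} {x : α}
    (h : Ach A B J {x}) : ∃ j ∈ J, A j = {x} ∨ B j = {x} := by
  obtain ⟨σ, hσ, hU⟩ := h
  have hxx : x ∈ J.biUnion σ := by rw [hU]; simp
  obtain ⟨j, hj, hxj⟩ := Finset.mem_biUnion.1 hxx
  have hsub : σ j ⊆ {x} := sigma_subset hU hj
  have hx : σ j = {x} :=
    le_antisymm hsub (Finset.singleton_subset_iff.2 hxj)
  rcases hσ j hj with h1 | h1 | h1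
  · exact ⟨j, hj, Or.inl (h1 ▸ hx)⟩
  · exact ⟨j, hj, Or.inr (h1 ▸ hx)⟩
  · rw [h1] at hx; exact absurd hx.symm (Finset.singleton_ne_empty x)

lemma ach_restrict {A B : β → Finset α} {J J' : Finset β} {S : Finset α}
    (h : Ach A B J S) (hJ : J' ⊆ J)
    (hkill : ∀ c ∈ J, c ∉ J' → ¬ A c ⊆ S ∧ ¬ B c ⊆ S) :
    Ach A B J' S := by
  obtain ⟨σ, hσ, hU⟩ := h
  refine ⟨σ, fun j hj => hσ j (hJ hj), ?_⟩
  apply le_antisymm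
  · intro z hz
    obtain ⟨b, hb, hzb⟩ := Finset.mem_biUnion.1 hz
    exact sigma_subset hU (hJ hb) hzb
  · intro z hz
    obtain ⟨b, hb, hzb⟩ := Finset.mem_biUnion.1 (hU ▸ hz)
    rcases Classical.em (b ∈ J') with hb' | hb'
    · exact Finset.mem_biUnion.2 ⟨b, hb', hzb⟩
    · exfalso
      have hsub : σ b ⊆ S := sigma_subset hU hb
      rcases hσ b hb with h1 | h1 | h1
      · exact (hkill b hb hb').1 (h1 ▸ hsub)
      · exact (hkill b hb hb').2 (h1 ▸ hsub)
      · rw [h1] at hzb; exact absurd hzb (Finset.notMem_empty z)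

/-- Merging point `y` into point `x` in a side. -/
def mergeSide (x y : α) (C : Finset α) : Finset α :=
  C.erase y ∪ (if y ∈ C then {x} else ∅)

lemma mem_mergeSide {x y z : α} {C : Finset α} :
    z ∈ mergeSide x y C ↔ (z ∈ C ∧ z ≠ y) ∨ (z = x ∧ y ∈ C) := by
  unfold mergeSide
  by_cases hy : y ∈ C
  · simp only [if_pos hy, Finset.mem_union, Finset.mem_erase, Finset.mem_singleton]
    constructor
    · rintro (⟨h1, h2⟩ | rfl)
      · exact Or.inl ⟨h2, h1⟩
      · exact Or.inr ⟨rfl, hy⟩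
    · rintro (⟨h1, h2⟩ | ⟨rfl, _⟩)
      · exact Or.inl ⟨h2, h1⟩
      · exact Or.inr rfl
  · simp only [if_neg hy, Finset.union_empty, Finset.mem_erase]
    constructor
    · rintro ⟨h1, h2⟩; exact Or.inl ⟨h2, h1⟩
    · rintro (⟨h1, h2⟩ | ⟨rfl, hy'⟩)
      · exact ⟨h2, h1⟩
      · exact absurd hy' hy

lemma mergeSide_empty (x y : α) : mergeSide x y ∅ = ∅ := by
  simp [mergeSide]

lemma mergeAch {A B : β → Finset α} {J : Finset β} {S : Finset α} {x y : α} {j : β}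
    (hxy : x ≠ y) (hA : A j = {x}) (hB : B j = {y})
    (hyS : y ∈ S ↔ x ∈ S) (h : Ach A B J S) :
    Ach (fun b => mergeSide x y (A b)) (fun b => mergeSide x y (B b))
      (J.erase j) (S.erase y) := by
  obtain ⟨σ, hσ, hU⟩ := h
  refine ⟨fun b => mergeSide x y (σ b), ?_, ?_⟩
  · intro b hb
    rcases hσ b (Finset.mem_of_mem_erase hb) with h1 | h1 | h1
    · exact Or.inl (by simp only []; rw [h1])
    · exact Or.inr (Or.inl (by simp only []; rw [h1]))
    · exact Or.inr (Or.inr (by simp only []; rw [h1, mergeSide_empty]))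
  · ext z
    simp only [Finset.mem_biUnion, Finset.mem_erase]
    constructor
    · rintro ⟨b, ⟨hbj, hb⟩, hz⟩
      rcases mem_mergeSide.1 hz with ⟨hzb, hzy⟩ | ⟨rfl, hyb⟩
      · exact ⟨hzy, sigma_subset hU hb hzb⟩
      · exact ⟨hxy, hyS.1 (sigma_subset hU hb hyb)⟩
    · rintro ⟨hzy, hzS⟩
      obtain ⟨b, hb, hzb⟩ := Finset.mem_biUnion.1 (hU ▸ hzS)
      by_cases hzx : z = x
      · subst hzx
        have hyS' : y ∈ S := hyS.2 hzS
        obtain ⟨b₂, hb₂, hyb₂⟩ := Finset.mem_biUnion.1 (hU ▸ hyS')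
        by_cases hbj : b = j
        · subst hbj
          have hb2j : b₂ ≠ b := by
            intro hE; subst hE
            rcases hσ b₂ hb₂ with h1 | h1 | h1
            · rw [h1, hA] at hzb hyb₂
              exact hxy (Finset.mem_singleton.1 hyb₂).symm
            · rw [h1, hB] at hzb
              exact hxy (Finset.mem_singleton.1 hzb)
            · rw [h1] at hzb; exact absurd hzb (Finset.notMem_empty _)
          exact ⟨b₂, ⟨hb2j, hb₂⟩, mem_mergeSide.2 (Or.inr ⟨rfl, hyb₂⟩)⟩
        · exact ⟨b, ⟨hbj, hb⟩, mem_mergeSide.2 (Or.inl ⟨hzb, hzy⟩)⟩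
      · have hbj : b ≠ j := by
          intro hE; subst hE
          rcases hσ b hb with h1 | h1 | h1
          · rw [h1, hA] at hzb; exact hzx (Finset.mem_singleton.1 hzb)
          · rw [h1, hB] at hzb; exact hzy (Finset.mem_singleton.1 hzb)
          · rw [h1] at hzb; exact absurd hzb (Finset.notMem_empty _)
        exact ⟨b, ⟨hbj, hb⟩, mem_mergeSide.2 (Or.inl ⟨hzb, hzy⟩)⟩

lemma three_le_card {J : Finset β} {a b c : β} (ha : a ∈ J) (hb : b ∈ J) (hc : c ∈ J)
    (hab : a ≠ b) (hac : a ≠ c) (hbc : b ≠ c) : 3 ≤ J.card := by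
  have hsub : ({a, b, c} : Finset β) ⊆ J := by
    intro t ht
    simp only [Finset.mem_insert, Finset.mem_singleton] at ht
    rcases ht with rfl | rfl | rfl <;> assumption
  have h3 : ({a, b, c} : Finset β).card = 3 := by
    rw [Finset.card_insert_of_notMem (by simp [hab, hac]),
        Finset.card_insert_of_notMem (by simp [hbc]), Finset.card_singleton]
  calc 3 = ({a, b, c} : Finset β).card := h3.symm
    _ ≤ J.card := Finset.card_le_card hsub


/-- Base case: dedicated pair plus a third point force three coordinates. -/
lemma h3_base {A B : β → Finset α} {J : Finset β} {S : Finset α} {x y z : α} {j : β}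
    (hdisj : ∀ b ∈ J, Disjoint (A b) (B b))
    (hxy : x ≠ y) (hzx : z ≠ x) (hzy : z ≠ y)
    (hj : j ∈ J) (hA : A j = {x}) (hB : B j = {y})
    (hz : ∃ jz ∈ J, A jz = {z} ∨ B jz = {z})
    (hS : Ach A B J S) (hxS : x ∈ S) (hyS : y ∈ S) (hzS : z ∈ S) :
    3 ≤ J.card := by
  obtain ⟨σ, hσ, hU⟩ := hS
  have hcov : ∀ w ∈ S, ∃ b ∈ J, w ∈ σ b := fun w hw => Finset.mem_biUnion.1 (hU ▸ hw)
  obtain ⟨w, hwxy, hwσ⟩ : ∃ w, (w = x ∨ w = y) ∧ w ∉ σ j := by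
    rcases hσ j hj with h1 | h1 | h1
    · exact ⟨y, Or.inr rfl, by rw [h1, hA]; simp [hxy.symm]⟩
    · exact ⟨x, Or.inl rfl, by rw [h1, hB]; simp [hxy]⟩
    · exact ⟨x, Or.inl rfl, by simp [h1]⟩
  have hwz : w ≠ z := by rcases hwxy with rfl | rfl
                         · exact hzx.symm
                         · exact hzy.symm
  have hwS : w ∈ S := by rcases hwxy with rfl | rfl <;> assumption
  obtain ⟨bw, hbw, hwbw⟩ := hcov w hwS
  have hbwj : bw ≠ j := fun hE => hwσ (hE ▸ hwbw)
  obtain ⟨bz, hbz, hzbz⟩ := hcov z hzS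
  have hbzj : bz ≠ j := by
    intro hE; subst hE
    rcases hσ bz hbz with h1 | h1 | h1
    · rw [h1, hA] at hzbz; exact hzx (Finset.mem_singleton.1 hzbz)
    · rw [h1, hB] at hzbz; exact hzy (Finset.mem_singleton.1 hzbz)
    · rw [h1] at hzbz; exact absurd hzbz (Finset.notMem_empty _)
  obtain ⟨jz, hjz, hjzs⟩ := hz
  have hjzj : jz ≠ j := by
    intro hE; subst hE
    rcases hjzs with h1 | h1
    · rw [hA] at h1; exact hzx (Finset.singleton_injective h1.symm)
    · rw [hB] at h1; exact hzy (Finset.singleton_injective h1.symm)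
  by_cases hbb : bw = bz
  · subst hbb
    by_cases hjzb : jz = bw
    · exfalso
      subst hjzb
      rcases hσ jz hjz with h1 | h1 | h1
      · rcases hjzs with h2 | h2
        · rw [h1, h2] at hwbw; exact hwz (Finset.mem_singleton.1 hwbw)
        · rw [h1] at hzbz
          have hzA : z ∈ A jz := hzbz
          have hzB : z ∈ B jz := by rw [h2]; exact Finset.mem_singleton_self z
          exact (Finset.disjoint_left.1 (hdisj jz hjz)) hzA hzB
      · rcases hjzs with h2 | h2
        · rw [h1] at hzbz
          exact (Finset.disjoint_left.1 (hdisj jz hjz)) (by rw [h2]; exact Finset.mem_singleton_self z) hzbz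
        · rw [h1, h2] at hwbw; exact hwz (Finset.mem_singleton.1 hwbw)
      · rw [h1] at hwbw; exact absurd hwbw (Finset.notMem_empty _)
    · exact three_le_card hj hbw hjz hbwj.symm hjzj.symm (fun hE => hjzb hE.symm)
  · exact three_le_card hj hbw hbz hbwj.symm hbzj.symm hbb


/-- The inductive step, assuming a dedicated pair `x,y` at coordinate `j`. -/
lemma step_lemma (N : ℕ)
    (ih : ∀ (P : Finset α) (J : Finset β) (A B : β → Finset α) (k : ℕ),
      P.card ≤ N → (∀ b ∈ J, Disjoint (A b) (B b)) → P.card ≤ k + 2 →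
      (P.card ≤ 2 → P.card ≤ k) →
      (∀ S ⊆ P, S.Nonempty → S.card ≤ k → Ach A B J S) → Ach A B J P →
      P.card ≤ J.card)
    (P : Finset α) (J : Finset β) (A B : β → Finset α) (k : ℕ)
    (hN : P.card ≤ N + 1)
    (hdisj : ∀ b ∈ J, Disjoint (A b) (B b))
    (hk : P.card ≤ k + 2) (hk2 : P.card ≤ 2 → P.card ≤ k) (hk1 : 1 ≤ k)
    (hach : ∀ S ⊆ P, S.Nonempty → S.card ≤ k → Ach A B J S)
    (hP : Ach A B J P)
    (hsing : ∀ z ∈ P, ∃ b ∈ J, A b = {z} ∨ B b = {z})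
    (x y : α) (hx : x ∈ P) (hy : y ∈ P) (hxy : x ≠ y)
    (j : β) (hj : j ∈ J) (hA : A j = {x}) (hB : B j = {y}) :
    P.card ≤ J.card := by
  by_cases hsep : ∃ j' ∈ J, j' ≠ j ∧ ((x ∈ A j' ∧ y ∈ B j') ∨ (y ∈ A j' ∧ x ∈ B j'))
  · -- Case A : a second coordinate separates x and y; drop both points + both coords
    obtain ⟨j', hj', hj'ne, hsepc⟩ := hsep
    have hxyP : ({x, y} : Finset α) ⊆ P := by
      intro t ht
      simp only [Finset.mem_insert, Finset.mem_singleton] at ht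
      rcases ht with rfl | rfl <;> assumption
    have hjjJ : ({j, j'} : Finset β) ⊆ J := by
      intro t ht
      simp only [Finset.mem_insert, Finset.mem_singleton] at ht
      rcases ht with rfl | rfl <;> assumption
    have hxycard : ({x, y} : Finset α).card = 2 := by
      rw [Finset.card_insert_of_notMem (by simp [hxy]), Finset.card_singleton]
    have hjjcard : ({j, j'} : Finset β).card = 2 := by
      rw [Finset.card_insert_of_notMem (by simp [Ne.symm hj'ne]), Finset.card_singleton]
    have hP'card : (P \ {x, y}).card = P.card - 2 := by
      rw [Finset.card_sdiff_of_subset hxyP, hxycard]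
    have hJ'card : (J \ {j, j'}).card = J.card - 2 := by
      rw [Finset.card_sdiff_of_subset hjjJ, hjjcard]
    have hkill : ∀ S, S ⊆ P \ {x, y} → Ach A B J S → Ach A B (J \ {j, j'}) S := by
      intro S hS hachS
      have hxS : x ∉ S := fun hmem => by
        have := hS hmem; rw [Finset.mem_sdiff] at this; exact this.2 (by simp)
      have hyS : y ∉ S := fun hmem => by
        have := hS hmem; rw [Finset.mem_sdiff] at this; exact this.2 (by simp)
      apply ach_restrict hachS (Finset.sdiff_subset)
      intro c hc hc'
      have hcm : c = j ∨ c = j' := by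
        by_contra hno
        push_neg at hno
        exact hc' (Finset.mem_sdiff.2 ⟨hc, by simp [hno.1, hno.2]⟩)
      rcases hcm with rfl | rfl
      · exact ⟨fun hsub => hxS (hsub (by rw [hA]; exact Finset.mem_singleton_self x)),
               fun hsub => hyS (hsub (by rw [hB]; exact Finset.mem_singleton_self y))⟩
      · rcases hsepc with ⟨hxa, hyb⟩ | ⟨hya, hxb⟩
        · exact ⟨fun hsub => hxS (hsub hxa), fun hsub => hyS (hsub hyb)⟩
        · exact ⟨fun hsub => hyS (hsub hya), fun hsub => hxS (hsub hxb)⟩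
    have hach' : ∀ S ⊆ P \ {x, y}, S.Nonempty → S.card ≤ k → Ach A B (J \ {j, j'}) S :=
      fun S hS hne hcard => hkill S hS (hach S (hS.trans Finset.sdiff_subset) hne hcard)
    have hP'ach : Ach A B (J \ {j, j'}) (P \ {x, y}) := by
      rcases (P \ {x, y}).eq_empty_or_nonempty with hE | hne'
      · rw [hE]; exact ach_empty A B _
      · exact hkill _ le_rfl
          (hach _ Finset.sdiff_subset hne' (by rw [hP'card]; omega))
    have hfin := ih (P \ {x, y}) (J \ {j, j'}) A B k (by omega)
      (fun b hb => hdisj b (Finset.sdiff_subset hb)) (by omega) (by omega) hach' hP'ach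
    have hJ2 : 2 ≤ J.card := by
      have := Finset.card_le_card hjjJ; omega
    have hP2 : 2 ≤ P.card := by
      have := Finset.card_le_card hxyP; omega
    omega
  · -- Case B : no separating coordinate
    push_neg at hsep
    by_cases h3 : P.card = 3
    · -- direct base case
      have hxyP : ({x, y} : Finset α) ⊆ P := by
        intro t ht
        simp only [Finset.mem_insert, Finset.mem_singleton] at ht
        rcases ht with rfl | rfl <;> assumption
      have hxycard : ({x, y} : Finset α).card = 2 := by
        rw [Finset.card_insert_of_notMem (by simp [hxy]), Finset.card_singleton]
      have h1 : (P \ {x, y}).card = 1 := by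
        rw [Finset.card_sdiff_of_subset hxyP, hxycard, h3]
      obtain ⟨z, hz⟩ := Finset.card_eq_one.1 h1
      have hzmem : z ∈ P \ {x, y} := by rw [hz]; exact Finset.mem_singleton_self z
      rw [Finset.mem_sdiff] at hzmem
      have hzP : z ∈ P := hzmem.1
      have hzx : z ≠ x := fun hE => hzmem.2 (by simp [hE])
      have hzy : z ≠ y := fun hE => hzmem.2 (by simp [hE])
      have h3J := h3_base hdisj hxy hzx hzy hj hA hB (hsing z hzP) hP hx hy hzP
      omega
    · -- merge y into x
      have hP2 : 2 ≤ P.card := Finset.one_lt_card.2 ⟨x, hx, y, hy, hxy⟩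
      have hdisj' : ∀ b ∈ J.erase j,
          Disjoint (mergeSide x y (A b)) (mergeSide x y (B b)) := by
        intro b hb
        obtain ⟨hbj, hbJ⟩ := Finset.mem_erase.1 hb
        have hns := hsep b hbJ hbj
        rw [Finset.disjoint_left]
        intro w hwA hwB
        rcases mem_mergeSide.1 hwA with ⟨hw1, hw2⟩ | ⟨rfl, hyA⟩
        · rcases mem_mergeSide.1 hwB with ⟨hw3, _⟩ | ⟨rfl, hyB⟩
          · exact (Finset.disjoint_left.1 (hdisj b hbJ)) hw1 hw3
          · exact hns.1 hw1 hyB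
        · rcases mem_mergeSide.1 hwB with ⟨hw3, _⟩ | ⟨_, hyB⟩
          · exact hns.2 hyA hw3
          · exact (Finset.disjoint_left.1 (hdisj b hbJ)) hyA hyB
      have hyP' : y ∉ P.erase y := Finset.notMem_erase y P
      have hach' : ∀ S ⊆ P.erase y, S.Nonempty → S.card ≤ k - 1 →
          Ach (fun b => mergeSide x y (A b)) (fun b => mergeSide x y (B b)) (J.erase j) S := by
        intro S hS hne hcard
        have hyS : y ∉ S := fun hmem => hyP' (hS hmem)
        by_cases hxS : x ∈ S
        · have hTsub : insert y S ⊆ P := by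
            intro t ht
            rcases Finset.mem_insert.1 ht with rfl | ht'
            · exact hy
            · exact Finset.erase_subset y P (hS ht')
          have hTcard : (insert y S).card ≤ k := by
            rw [Finset.card_insert_of_notMem hyS]; omega
          have hT := hach (insert y S) hTsub ⟨y, Finset.mem_insert_self y S⟩ hTcard
          have hiff : y ∈ insert y S ↔ x ∈ insert y S := by
            simp [hxS]
          have := mergeAch hxy hA hB hiff hT
          rwa [Finset.erase_insert hyS] at this
        · have hT := hach S (hS.trans (Finset.erase_subset y P)) hne (by omega)
          have hiff : y ∈ S ↔ x ∈ S := by simp [hyS, hxS]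
          have := mergeAch hxy hA hB hiff hT
          rwa [Finset.erase_eq_of_notMem hyS] at this
      have hP'ach : Ach (fun b => mergeSide x y (A b)) (fun b => mergeSide x y (B b))
          (J.erase j) (P.erase y) :=
        mergeAch hxy hA hB (by simp [hx, hy]) hP
      have hP'card : (P.erase y).card = P.card - 1 := Finset.card_erase_of_mem hy
      have hJ'card : (J.erase j).card = J.card - 1 := Finset.card_erase_of_mem hj
      have hk2' : (P.erase y).card ≤ 2 → (P.erase y).card ≤ k - 1 := by
        intro h2
        have hPc : P.card = 2 ∨ P.card = 3 := by omega
        rcases hPc with hPc | hPc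
        · have := hk2 (by omega); omega
        · exact absurd hPc h3
      have hfin := ih (P.erase y) (J.erase j)
        (fun b => mergeSide x y (A b)) (fun b => mergeSide x y (B b)) (k - 1)
        (by omega) hdisj' (by omega) hk2' hach' hP'ach
      have hJ1 : 1 ≤ J.card := Finset.card_pos.2 ⟨j, hj⟩
      omega


/-- Main combinatorial bound: the number of coordinates is at least the
number of points. -/
lemma systemCard : ∀ (N : ℕ) (P : Finset α) (J : Finset β) (A B : β → Finset α) (k : ℕ),
    P.card ≤ N →
    (∀ b ∈ J, Disjoint (A b) (B b)) →
    P.card ≤ k + 2 →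
    (P.card ≤ 2 → P.card ≤ k) →
    (∀ S ⊆ P, S.Nonempty → S.card ≤ k → Ach A B J S) →
    Ach A B J P →
    P.card ≤ J.card := by
  intro N
  induction N with
  | zero =>
    intro P J A B k hN _ _ _ _ _
    omega
  | succ N ih =>
    intro P J A B k hN hdisj hk hk2 hach hP
    rcases P.eq_empty_or_nonempty with rfl | hne
    · simp
    have hPpos : 1 ≤ P.card := Finset.card_pos.2 hne
    have hk1 : 1 ≤ k := by
      by_cases h2 : P.card ≤ 2
      · exact le_trans hPpos (hk2 h2)
      · omega
    have hsing : ∀ z ∈ P, ∃ b ∈ J, A b = {z} ∨ B b = {z} := by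
      intro z hz
      apply ach_singleton (A := A) (B := B) (J := J)
      apply hach {z} (Finset.singleton_subset_iff.2 hz) ⟨z, Finset.mem_singleton_self z⟩
      simpa using hk1
    obtain ⟨x₀, hx₀⟩ := hne
    obtain ⟨j₀, hj₀, _⟩ := hsing x₀ hx₀
    obtain ⟨ψ, hψ⟩ : ∃ ψ : α → β, ∀ x ∈ P, ψ x ∈ J ∧ (A (ψ x) = {x} ∨ B (ψ x) = {x}) := by
      choose g hg1 hg2 using hsing
      refine ⟨fun x => if hx : x ∈ P then g x hx else j₀, fun x hx => ?_⟩
      simp only [dif_pos hx]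
      exact ⟨hg1 x hx, hg2 x hx⟩
    by_cases hinj : Set.InjOn ψ ↑P
    · exact Finset.card_le_card_of_injOn ψ (fun x hx => (hψ x hx).1) hinj
    · have hcol : ∃ x ∈ P, ∃ y ∈ P, ψ x = ψ y ∧ x ≠ y := by
        unfold Set.InjOn at hinj
        push_neg at hinj
        obtain ⟨x, hx, y, hy, hxy, hne'⟩ := hinj
        exact ⟨x, hx, y, hy, hxy, hne'⟩
      obtain ⟨x, hx, y, hy, hψeq, hxyne⟩ := hcol
      have hjJ : ψ x ∈ J := (hψ x hx).1
      have hxside := (hψ x hx).2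
      have hyside := (hψ y hy).2
      rw [← hψeq] at hyside
      rcases hxside with h1 | h1 <;> rcases hyside with h2 | h2
      · exact absurd (Finset.singleton_injective (h1.symm.trans h2)) hxyne
      · exact step_lemma N ih P J A B k hN hdisj hk hk2 hk1 hach hP hsing
          x y hx hy hxyne (ψ x) hjJ h1 h2
      · exact step_lemma N ih P J A B k hN hdisj hk hk2 hk1 hach hP hsing
          y x hy hx hxyne.symm (ψ x) hjJ h2 h1
      · exact absurd (Finset.singleton_injective (h1.symm.trans h2)) hxyne


end CellAux

lemma Tcell_star_right (a : BB) : Tcell a BB.star = true := by cases a <;> rfl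

lemma Tcell_false_iff {a b : BB} (ha : a ∈ Bstar) (hb : b ∈ Bstar) :
    Tcell a b = false ↔ (a = BB.zero ∧ b = BB.one) ∨ (a = BB.one ∧ b = BB.zero) := by
  simp only [Bstar, Set.mem_insert_iff, Set.mem_singleton_iff] at ha hb
  rcases ha with rfl | rfl | rfl <;> rcases hb with rfl | rfl | rfl <;> simp [Tcell]

lemma Tword_false_iff {n : ℕ} (u θ : Fin n → BB) :
    Tword u θ = false ↔ ∃ j, Tcell (u j) (θ j) = false := by
  simp [Tword, Bool.not_eq_true]

/-- Membership of the indicator of a complement in F⋆. -/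
lemma fS_mem (q : ℕ) (hq : 3 ≤ q) (S : Finset (Fin q)) (hne : S.Nonempty)
    (hcard : S.card ≠ q - 1) :
    (fun x => decide (x ∉ S)) ∈ { f : Fin q → Bool | f ∉ Eset q ∧ f ≠ fun _ => true } := by
  constructor
  · rintro ⟨t, ht⟩
    have hiff : ∀ x : Fin q, (x ∉ S) ↔ (x = t) := by
      intro x
      have h0 := congrFun ht x
      constructor
      · intro hxS
        by_contra hxt
        simp [hxS, hxt] at h0
      · intro hxt hxS
        simp only [hxt, decide_eq_decide, decide_eq_true_eq] at h0
        simp [hxS, hxt] at h0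
        exact h0 (hxt ▸ hxS)
    have hSe : S = Finset.univ.erase t := by
      ext x
      simp only [Finset.mem_erase, Finset.mem_univ, and_true]
      constructor
      · intro hxS hxt
        exact ((hiff x).2 hxt) hxS
      · intro hxt
        by_contra hxS
        exact hxt ((hiff x).1 hxS)
    apply hcard
    rw [hSe, Finset.card_erase_of_mem (Finset.mem_univ t), Finset.card_univ,
      Fintype.card_fin]
  · intro hconst
    obtain ⟨s, hs⟩ := hne
    have := congrFun hconst s
    simp [hs] at this

theorem lower_bound (q n : ℕ) (hq : 3 ≤ q)
    (h : Implementable Bstar Bstar n q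
      { f | f ∉ Eset q ∧ f ≠ fun _ => true }) :
    q ≤ n := by
  classical
  obtain ⟨u, θ, hu, hθ, himp⟩ := h
  set A : Fin n → Finset (Fin q) :=
    fun j => Finset.univ.filter fun x => u x j = BB.zero with hAdef
  set B : Fin n → Finset (Fin q) :=
    fun j => Finset.univ.filter fun x => u x j = BB.one with hBdef
  have hdisj : ∀ b ∈ (Finset.univ : Finset (Fin n)), Disjoint (A b) (B b) := by
    intro b _
    rw [Finset.disjoint_left]
    intro w hwA hwB
    rw [hAdef] at hwA
    rw [hBdef] at hwB
    simp only [Finset.mem_filter] at hwA hwB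
    rw [hwA.2] at hwB
    exact BB.noConfusion hwB.2
  have key : ∀ S : Finset (Fin q), S.Nonempty → S.card ≠ q - 1 →
      Ach A B (Finset.univ : Finset (Fin n)) S := by
    intro S hSne hScard
    set f : Fin q → Bool := fun x => decide (x ∉ S) with hfdef
    have hfΦ := fS_mem q hq S hSne hScard
    refine ⟨fun j => if θ f j = BB.zero then B j else if θ f j = BB.one then A j else ∅,
      ?_, ?_⟩
    · intro j _
      by_cases h0 : θ f j = BB.zero
      · simp [h0]
      · by_cases h1 : θ f j = BB.one
        · simp [h0, h1]
        · simp [h0, h1]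
    · ext x
      simp only [Finset.mem_biUnion, Finset.mem_univ, true_and]
      have hfx := himp f hfΦ x
      have hmem : ∀ j : Fin n,
          (x ∈ if θ f j = BB.zero then B j else if θ f j = BB.one then A j else ∅)
          ↔ Tcell (u x j) (θ f j) = false := by
        intro j
        have ha := hu x j
        have hb := hθ f hfΦ j
        rw [Tcell_false_iff ha hb]
        simp only [Bstar, Set.mem_insert_iff, Set.mem_singleton_iff] at ha hb
        rcases hb with h' | h' | h' <;>
          simp [h', hAdef, hBdef, Finset.mem_filter]
      constructor
      · rintro ⟨j, hj⟩
        have := (hmem j).1 hj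
        by_contra hxS
        have : f x = true := by simp [hfdef, hxS]
        rw [this] at hfx
        have hTw : Tword (u x) (θ f) = false := (Tword_false_iff _ _).2 ⟨j, (hmem j).1 hj⟩
        rw [← hfx] at hTw
        exact Bool.noConfusion hTw
      · intro hxS
        have hf : f x = false := by simp [hfdef, hxS]
        rw [hf] at hfx
        obtain ⟨j, hj⟩ := (Tword_false_iff _ _).1 hfx.symm
        exact ⟨j, (hmem j).2 hj⟩
  have huniv : (Finset.univ : Finset (Fin q)).Nonempty :=
    ⟨⟨0, by omega⟩, Finset.mem_univ _⟩
  have hcardq : (Finset.univ : Finset (Fin q)).card = q := by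
    rw [Finset.card_univ, Fintype.card_fin]
  have hcardn : (Finset.univ : Finset (Fin n)).card = n := by
    rw [Finset.card_univ, Fintype.card_fin]
  have := systemCard q (Finset.univ : Finset (Fin q)) (Finset.univ : Finset (Fin n))
    A B (q - 2) (by omega) hdisj (by omega) (by omega)
    (fun S _ hSne hScard => key S hSne (by omega))
    (key Finset.univ huniv (by omega))
  omega

theorem construction (q n : ℕ) (hq : 3 ≤ q) (hqn : q ≤ n) :
    Implementable Bstar Bstar n q Set.univ := by
  refine ⟨fun x j => if (j : ℕ) = (x : ℕ) then BB.one else BB.zero,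
    fun f j => if hjq : (j : ℕ) < q then
        (if f ⟨(j : ℕ), hjq⟩ = false then BB.zero else BB.star) else BB.star,
    ?_, ?_, ?_⟩
  · intro x j
    by_cases hc : (j : ℕ) = (x : ℕ) <;> simp [hc, Bstar]
  · intro f _ j
    by_cases hjq : (j : ℕ) < q
    · by_cases hf : f ⟨(j : ℕ), hjq⟩ = false <;> simp [hjq, hf, Bstar]
    · simp [hjq, Bstar]
  · intro f _ x
    by_cases hfx : f x = true
    · rw [hfx]
      symm
      rw [Tword, decide_eq_true_eq]
      intro j
      by_cases hjq : (j : ℕ) < q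
      · by_cases hf : f ⟨(j : ℕ), hjq⟩ = false
        · have hne : (j : ℕ) ≠ (x : ℕ) := by
            intro hE
            have hx : (⟨(j : ℕ), hjq⟩ : Fin q) = x := Fin.ext hE
            rw [hx, hfx] at hf
            exact Bool.noConfusion hf
          simp only [dif_pos hjq, if_pos hf, if_neg hne]
          rfl
        · simp only [dif_pos hjq, if_neg hf]
          exact Tcell_star_right _
      · simp only [dif_neg hjq]
        exact Tcell_star_right _
    · have hfx' : f x = false := by
        cases hfe : f x
        · rfl
        · exact absurd hfe hfx
      rw [hfx']
      symm
      rw [← Bool.not_eq_true, Tword, decide_eq_true_eq]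
      intro hall
      have hxn : (x : ℕ) < n := lt_of_lt_of_le x.isLt hqn
      have hthis := hall ⟨(x : ℕ), hxn⟩
      simp only at hthis
      have hxq : ((⟨(x : ℕ), hxn⟩ : Fin n) : ℕ) < q := x.isLt
      have hxx : (⟨((⟨(x : ℕ), hxn⟩ : Fin n) : ℕ), hxq⟩ : Fin q) = x := Fin.ext rfl
      rw [dif_pos hxq, hxx, if_pos hfx'] at hthis
      simp [Tcell] at hthis


theorem Fsetstar_implementable_implies_Fset (q n : ℕ) (hq : 3 ≤ q) (hn : 1 ≤ n)
    (h : Implementable Bstar Bstar n q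
      { f | f ∉ Eset q ∧ f ≠ fun _ => true }) :
    Implementable Bstar Bstar n q Set.univ := by
  exact construction q n hq (lower_bound q n hq h)
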